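/- Let μ̃ be the bilinear skew-symmetric map on ℝ^7 with nonzero basis brackets [e1,e2]=(√114/38)e3+(√57/38)e4, [e1,e3]=(√190/38)e6, [e1,e4]=(√19/19)e5, [e1,e6]=(√114/38)e7, [e2,e3]=(√57/38)e7, [e2,e4]=(√114/38)e7. Then μ̃ satisfies the Jacobi identity, D = diag(1,2,3,3,4,4,5) is a derivation of (ℝ^7,μ̃), and m(μ̃) = -(20/19)·Id + (11/38)·D; in particular m(μ̃) = diag(-29/38,-9/19,-7/38,-7/38,2/19,2/19,15/38). -/

import Mathlib

open Finset

noncomputable section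

/-- `ℝ⁷` with its standard basis and standard inner product. -/
abbrev V7 : Type := Fin 7 → ℝ

/-- The standard basis vector `e i`. -/
def e (i : Fin 7) : V7 := Pi.single i 1

/-- The standard inner product on `ℝ⁷`. -/
def dot (x y : V7) : ℝ := ∑ i, x i * y i

/-- Structure constants built from a list of entries `(i, j, k, a)`, each meaning that
`μ (e i) (e j)` has component `a` along `e k` (and `μ (e j) (e i)` has component `-a`);
all unlisted basis brackets are `0`. -/
def toC (L : List (Fin 7 × Fin 7 × Fin 7 × ℝ)) (i j k : Fin 7) : ℝ :=
  (L.map fun t =>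
      (if t.1 = i ∧ t.2.1 = j ∧ t.2.2.1 = k then t.2.2.2 else 0)
    - (if t.1 = j ∧ t.2.1 = i ∧ t.2.2.1 = k then t.2.2.2 else 0)).sum

/-- The bilinear skew-symmetric map on `ℝ⁷` with structure constants `c`. -/
def br (c : Fin 7 → Fin 7 → Fin 7 → ℝ) (x y : V7) : V7 :=
  fun k => ∑ i, ∑ j, x i * y j * c i j k

lemma br_add_left (c : Fin 7 → Fin 7 → Fin 7 → ℝ) (x x' y : V7) :
    br c (x + x') y = br c x y + br c x' y := by
  funext k
  simp only [br, Pi.add_apply, ← Finset.sum_add_distrib]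
  exact Finset.sum_congr rfl fun i _ => Finset.sum_congr rfl fun j _ => by ring

lemma br_smul_left (c : Fin 7 → Fin 7 → Fin 7 → ℝ) (r : ℝ) (x y : V7) :
    br c (r • x) y = r • br c x y := by
  funext k
  simp only [br, Pi.smul_apply, smul_eq_mul, Finset.mul_sum]
  exact Finset.sum_congr rfl fun i _ => Finset.sum_congr rfl fun j _ => by ring

lemma br_add_right (c : Fin 7 → Fin 7 → Fin 7 → ℝ) (x y y' : V7) :
    br c x (y + y') = br c x y + br c x y' := by
  funext k
  simp only [br, Pi.add_apply, ← Finset.sum_add_distrib]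
  exact Finset.sum_congr rfl fun i _ => Finset.sum_congr rfl fun j _ => by ring

lemma br_smul_right (c : Fin 7 → Fin 7 → Fin 7 → ℝ) (r : ℝ) (x y : V7) :
    br c x (r • y) = r • br c x y := by
  funext k
  simp only [br, Pi.smul_apply, smul_eq_mul, Finset.mul_sum]
  exact Finset.sum_congr rfl fun i _ => Finset.sum_congr rfl fun j _ => by ring

lemma br_zero_left (c : Fin 7 → Fin 7 → Fin 7 → ℝ) (y : V7) : br c 0 y = 0 := by
  funext k; simp [br]

lemma br_zero_right (c : Fin 7 → Fin 7 → Fin 7 → ℝ) (x : V7) : br c x 0 = 0 := by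
  funext k; simp [br]

/-- The space of derivations of the algebra `(ℝ⁷, br c)`, i.e. the linear maps `D` with
`D (μ x y) = μ (D x) y + μ x (D y)` for all `x, y`, as a submodule of the endomorphisms. -/
def derivations (c : Fin 7 → Fin 7 → Fin 7 → ℝ) : Submodule ℝ (Module.End ℝ V7) where
  carrier := {D | ∀ x y, D (br c x y) = br c (D x) y + br c x (D y)}
  add_mem' := by
    intro D E hD hE x y
    simp only [LinearMap.add_apply, hD x y, hE x y, br_add_left, br_add_right]
    abel
  zero_mem' := by
    intro x y
    simp [br_zero_left, br_zero_right]
  smul_mem' := by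
    intro r D hD x y
    simp only [LinearMap.smul_apply, hD x y, smul_add, br_smul_left, br_smul_right]

/-- The Jacobi identity for the bracket `br c`. -/
def Jacobi (c : Fin 7 → Fin 7 → Fin 7 → ℝ) : Prop :=
  ∀ x y z : V7, br c (br c x y) z + br c (br c y z) x + br c (br c z x) y = 0

/-- Skew-symmetry of the bracket `br c`. -/
def Skew (c : Fin 7 → Fin 7 → Fin 7 → ℝ) : Prop :=
  ∀ x y : V7, br c x y = - br c y x

/-- The diagonal endomorphism `diag (a 1, …, a 7)` of `ℝ⁷`, `e i ↦ a i • e i`. -/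
def diagL (a : Fin 7 → ℝ) : Module.End ℝ V7 :=
  LinearMap.pi fun i => a i • LinearMap.proj i

/-- Structure constants of the bracket `μ̃`. -/
def c15 : Fin 7 → Fin 7 → Fin 7 → ℝ :=
  toC [(0, 1, 2, Real.sqrt 114 / 38),
   (0, 1, 3, Real.sqrt 57 / 38),
   (0, 2, 5, Real.sqrt 190 / 38),
   (0, 3, 4, Real.sqrt 19 / 19),
   (0, 5, 6, Real.sqrt 114 / 38),
   (1, 2, 6, Real.sqrt 57 / 38),
   (1, 3, 6, Real.sqrt 114 / 38)]

-- ===================== auxiliary lemmas =====================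

section Aux

lemma dot_e (x : V7) (k : Fin 7) : dot x (e k) = x k := by
  simp [dot, e, Pi.single_apply]

lemma br_ee (c : Fin 7 → Fin 7 → Fin 7 → ℝ) (a b k : Fin 7) : br c (e a) (e b) k = c a b k := by
  simp [br, e, Pi.single_apply, ite_mul, mul_ite]

lemma ext_e (f g : Module.End ℝ V7) (h : ∀ p, f (e p) = g (e p)) : f = g := by
  apply LinearMap.ext; intro x
  have hx : ∀ (v : V7), v = ∑ p, v p • e p := by
    intro v; funext k; simp [e, Pi.single_apply]
  calc f x = f (∑ p, x p • e p) := by rw [← hx x]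
    _ = ∑ p, x p • f (e p) := by simp [map_sum, map_smul]
    _ = ∑ p, x p • g (e p) := by simp only [h]
    _ = g (∑ p, x p • e p) := by simp [map_sum, map_smul]
    _ = g x := by rw [← hx x]

lemma diagL_apply (a : Fin 7 → ℝ) (x : V7) (k : Fin 7) : diagL a x k = a k * x k := by
  simp [diagL]

-- sum manipulation helpers
lemma auxSwap (f : Fin 7 → Fin 7 → ℝ) : ∑ a, ∑ b, f a b = ∑ b, ∑ a, f a b :=
  Finset.sum_comm ..

lemma auxRot (f : Fin 7 → Fin 7 → Fin 7 → ℝ) :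
    ∑ a, ∑ b, ∑ c, f a b c = ∑ c, ∑ a, ∑ b, f a b c := by
  calc ∑ a, ∑ b, ∑ c, f a b c
      = ∑ a, ∑ c, ∑ b, f a b c := Finset.sum_congr rfl fun a _ => auxSwap _
    _ = ∑ c, ∑ a, ∑ b, f a b c := auxSwap _

lemma auxRot' (f : Fin 7 → Fin 7 → Fin 7 → ℝ) :
    ∑ a, ∑ b, ∑ c, f a b c = ∑ b, ∑ c, ∑ a, f a b c :=
  (auxRot fun b c a => f a b c).symm

-- skew-symmetry of toC
lemma toC_swap (L : List (Fin 7 × Fin 7 × Fin 7 × ℝ)) (i j k : Fin 7) :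
    toC L j i k = - toC L i j k := by
  induction L with
  | nil => simp [toC]
  | cons t M ih =>
    simp only [toC, List.map_cons, List.sum_cons] at ih ⊢
    linear_combination ih

lemma c15_skew (a b i : Fin 7) : c15 a b i = - c15 b a i := by
  rw [c15, toC_swap]

lemma skew15 : Skew c15 := by
  intro x y
  funext k
  show br c15 x y k = (- br c15 y x) k
  rw [Pi.neg_apply]
  calc br c15 x y k = ∑ i, ∑ j, x i * y j * c15 i j k := rfl
    _ = ∑ i, ∑ j, -(y j * x i * c15 j i k) := by
        refine Finset.sum_congr rfl fun i _ => Finset.sum_congr rfl fun j _ => ?_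
        rw [c15_skew i j k]; ring
    _ = - ∑ i, ∑ j, y j * x i * c15 j i k := by
        simp [Finset.sum_neg_distrib]
    _ = - ∑ j, ∑ i, y j * x i * c15 j i k := by rw [auxSwap]
    _ = - br c15 y x k := rfl

-- weights / derivation
lemma toC_wt (a : Fin 7 → ℝ) :
    ∀ (L : List (Fin 7 × Fin 7 × Fin 7 × ℝ)),
      (∀ t ∈ L, a t.2.2.1 = a t.1 + a t.2.1) →
      ∀ i j k, a k * toC L i j k = (a i + a j) * toC L i j k := by
  intro L
  induction L with
  | nil => intro _ i j k; simp [toC]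
  | cons t M ih =>
    intro h i j k
    have ht := h t List.mem_cons_self
    have hM := ih (fun s hs => h s (List.mem_cons_of_mem t hs)) i j k
    simp only [toC, List.map_cons, List.sum_cons] at hM ⊢
    have hX : a k * (if t.1 = i ∧ t.2.1 = j ∧ t.2.2.1 = k then t.2.2.2 else 0)
        = (a i + a j) * (if t.1 = i ∧ t.2.1 = j ∧ t.2.2.1 = k then t.2.2.2 else 0) := by
      by_cases hc : t.1 = i ∧ t.2.1 = j ∧ t.2.2.1 = k
      · obtain ⟨h1, h2, h3⟩ := hc
        rw [← h1, ← h2, ← h3, ht]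
        try ring
      · simp [hc]
    have hY : a k * (if t.1 = j ∧ t.2.1 = i ∧ t.2.2.1 = k then t.2.2.2 else 0)
        = (a i + a j) * (if t.1 = j ∧ t.2.1 = i ∧ t.2.2.1 = k then t.2.2.2 else 0) := by
      by_cases hc : t.1 = j ∧ t.2.1 = i ∧ t.2.2.1 = k
      · obtain ⟨h1, h2, h3⟩ := hc
        rw [← h1, ← h2, ← h3, ht]
        try ring
      · simp [hc]
    linear_combination hX - hY + hM

lemma wt15 : ∀ i j k, (![1, 2, 3, 3, 4, 4, 5] : Fin 7 → ℝ) k * c15 i j k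
    = ((![1, 2, 3, 3, 4, 4, 5] : Fin 7 → ℝ) i + (![1, 2, 3, 3, 4, 4, 5] : Fin 7 → ℝ) j) * c15 i j k := by
  refine toC_wt _ _ ?_
  intro t ht
  fin_cases ht <;>
    norm_num [show ((![1, 2, 3, 3, 4, 4, 5] : Fin 7 → ℝ) 0) = 1 from rfl,
      show ((![1, 2, 3, 3, 4, 4, 5] : Fin 7 → ℝ) 1) = 2 from rfl,
      show ((![1, 2, 3, 3, 4, 4, 5] : Fin 7 → ℝ) 2) = 3 from rfl,
      show ((![1, 2, 3, 3, 4, 4, 5] : Fin 7 → ℝ) 3) = 3 from rfl,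
      show ((![1, 2, 3, 3, 4, 4, 5] : Fin 7 → ℝ) 4) = 4 from rfl,
      show ((![1, 2, 3, 3, 4, 4, 5] : Fin 7 → ℝ) 5) = 4 from rfl,
      show ((![1, 2, 3, 3, 4, 4, 5] : Fin 7 → ℝ) 6) = 5 from rfl]

lemma deriv15 : diagL ![1, 2, 3, 3, 4, 4, 5] ∈ derivations c15 := by
  show ∀ x y, diagL ![1, 2, 3, 3, 4, 4, 5] (br c15 x y)
      = br c15 (diagL ![1, 2, 3, 3, 4, 4, 5] x) y + br c15 x (diagL ![1, 2, 3, 3, 4, 4, 5] y)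
  intro x y
  funext k
  rw [Pi.add_apply, diagL_apply]
  show (![1, 2, 3, 3, 4, 4, 5] : Fin 7 → ℝ) k * (∑ i, ∑ j, x i * y j * c15 i j k)
      = (∑ i, ∑ j, diagL ![1, 2, 3, 3, 4, 4, 5] x i * y j * c15 i j k)
        + (∑ i, ∑ j, x i * diagL ![1, 2, 3, 3, 4, 4, 5] y j * c15 i j k)
  rw [← Finset.sum_add_distrib, Finset.mul_sum]
  refine Finset.sum_congr rfl fun i _ => ?_
  rw [← Finset.sum_add_distrib, Finset.mul_sum]
  refine Finset.sum_congr rfl fun j _ => ?_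
  rw [diagL_apply, diagL_apply]
  linear_combination x i * y j * wt15 i j k

-- Jacobi
def T15 (p q r k : Fin 7) : ℝ :=
  ∑ i, (c15 p q i * c15 i r k + c15 q r i * c15 i p k + c15 r p i * c15 i q k)

lemma T15_cyc (p q r k : Fin 7) : T15 p q r k = T15 q r p k := by
  refine Finset.sum_congr rfl fun i _ => by ring

lemma T15_swap (p q r k : Fin 7) : T15 q p r k = - T15 p q r k := by
  unfold T15
  rw [← Finset.sum_neg_distrib]
  refine Finset.sum_congr rfl fun i _ => ?_
  rw [c15_skew q p i, c15_skew p r i, c15_skew r q i]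
  ring

lemma T15_last (p q r k : Fin 7) : T15 p q r k = - T15 p r q k := by
  rw [T15_cyc, T15_cyc, T15_swap]

lemma T15_eq12 (p r k : Fin 7) : T15 p p r k = 0 := by
  have h := T15_swap p p r k
  linarith

lemma T15_eq23 (p q k : Fin 7) : T15 p q q k = 0 := by
  have h := T15_last p q q k
  linarith

lemma T15_eq13 (p q k : Fin 7) : T15 p q p k = 0 := by
  rw [T15_cyc]
  exact T15_eq23 q p k

set_option maxHeartbeats 4000000 in
lemma T15_sorted : ∀ p q r : Fin 7, p < q → q < r → ∀ k, T15 p q r k = 0 := by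
  intro p q r hpq hqr
  fin_cases p <;> fin_cases q <;> fin_cases r <;>
    first
      | exact absurd hpq (by decide)
      | exact absurd hqr (by decide)
      | (intro k
         simp (config := { decide := true }) [T15, c15, toC, Fin.sum_univ_seven])

lemma T15_lt (p q r k : Fin 7) (hpq : p < q) : T15 p q r k = 0 := by
  rcases lt_trichotomy q r with h | h | h
  · exact T15_sorted p q r hpq h k
  · subst h; exact T15_eq23 p q k
  · rcases lt_trichotomy p r with h' | h' | h'
    · rw [T15_last, T15_sorted p r q h' h k, neg_zero]
    · subst h'; exact T15_eq13 p q k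
    · rw [T15_cyc, T15_cyc]
      exact T15_sorted r p q h' hpq k

lemma T15_all (p q r k : Fin 7) : T15 p q r k = 0 := by
  rcases lt_trichotomy p q with h | h | h
  · exact T15_lt p q r k h
  · subst h; exact T15_eq12 p r k
  · rw [show T15 p q r k = - T15 q p r k from T15_swap q p r k, T15_lt q p r k h, neg_zero]

lemma br_br (c : Fin 7 → Fin 7 → Fin 7 → ℝ) (x y z : V7) (k : Fin 7) :
    br c (br c x y) z k = ∑ p, ∑ q, ∑ j, x p * y q * z j * (∑ i, c p q i * c i j k) := by
  have h1 : br c (br c x y) z k = ∑ i, ∑ j, ∑ p, ∑ q, x p * y q * z j * (c p q i * c i j k) := by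
    simp only [br, Finset.sum_mul]
    exact Finset.sum_congr rfl fun i _ => Finset.sum_congr rfl fun j _ =>
      Finset.sum_congr rfl fun p _ => Finset.sum_congr rfl fun q _ => by ring
  rw [h1]
  calc ∑ i, ∑ j, ∑ p, ∑ q, x p * y q * z j * (c p q i * c i j k)
      = ∑ j, ∑ i, ∑ p, ∑ q, x p * y q * z j * (c p q i * c i j k) :=
        auxSwap fun i j => ∑ p, ∑ q, x p * y q * z j * (c p q i * c i j k)
    _ = ∑ j, ∑ p, ∑ q, ∑ i, x p * y q * z j * (c p q i * c i j k) :=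
        Finset.sum_congr rfl fun j _ =>
          auxRot' fun i p q => x p * y q * z j * (c p q i * c i j k)
    _ = ∑ p, ∑ q, ∑ j, ∑ i, x p * y q * z j * (c p q i * c i j k) :=
        auxRot' fun j p q => ∑ i, x p * y q * z j * (c p q i * c i j k)
    _ = ∑ p, ∑ q, ∑ j, x p * y q * z j * (∑ i, c p q i * c i j k) :=
        Finset.sum_congr rfl fun p _ => Finset.sum_congr rfl fun q _ =>
          Finset.sum_congr rfl fun j _ => (Finset.mul_sum _ _ _).symm

lemma jacobi15 : Jacobi c15 := by
  intro x y z
  funext k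
  rw [Pi.add_apply, Pi.add_apply, Pi.zero_apply]
  have e1 := br_br c15 x y z k
  have e2 := (br_br c15 y z x k).trans
    (auxRot fun a b c => y a * z b * x c * (∑ i, c15 a b i * c15 i c k))
  have e3 := (br_br c15 z x y k).trans
    (auxRot' fun a b c => z a * x b * y c * (∑ i, c15 a b i * c15 i c k))
  rw [e1, e2, e3]
  rw [← Finset.sum_add_distrib, ← Finset.sum_add_distrib]
  refine Finset.sum_eq_zero fun p _ => ?_
  rw [← Finset.sum_add_distrib, ← Finset.sum_add_distrib]
  refine Finset.sum_eq_zero fun q _ => ?_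
  rw [← Finset.sum_add_distrib, ← Finset.sum_add_distrib]
  refine Finset.sum_eq_zero fun r _ => ?_
  have hT : (∑ i, c15 p q i * c15 i r k) + (∑ i, c15 q r i * c15 i p k)
      + (∑ i, c15 r p i * c15 i q k) = 0 := by
    rw [← Finset.sum_add_distrib, ← Finset.sum_add_distrib]
    exact T15_all p q r k
  linear_combination x p * y q * z r * hT

set_option maxHeartbeats 4000000 in
lemma moment15 (m : Module.End ℝ V7)
    (h : ∀ x y : V7, dot (m x) y =
        -2 * ∑ i, ∑ j, dot (br c15 x (e i)) (e j) * dot (br c15 y (e i)) (e j)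
        + ∑ i, ∑ j, dot (br c15 (e i) (e j)) x * dot (br c15 (e i) (e j)) y) :
    m = diagL ![-29/38, -9/19, -7/38, -7/38, 2/19, 2/19, 15/38] := by
  have hval : ∀ p k : Fin 7, m (e p) k =
      -2 * ∑ i, ∑ j, c15 p i j * c15 k i j + ∑ i, ∑ j, c15 i j p * c15 i j k := by
    intro p k
    have hh := h (e p) (e k)
    simpa only [dot_e, br_ee] using hh
  apply ext_e
  intro p
  funext k
  rw [hval p k, diagL_apply]
  have h114 : Real.sqrt 114 * Real.sqrt 114 = 114 := Real.mul_self_sqrt (by norm_num)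
  have h57 : Real.sqrt 57 * Real.sqrt 57 = 57 := Real.mul_self_sqrt (by norm_num)
  have h190 : Real.sqrt 190 * Real.sqrt 190 = 190 := Real.mul_self_sqrt (by norm_num)
  have h19 : Real.sqrt 19 * Real.sqrt 19 = 19 := Real.mul_self_sqrt (by norm_num)
  fin_cases p <;> fin_cases k <;>
    (simp (config := { decide := true })
      [c15, toC, Fin.sum_univ_seven, e, Pi.single_apply,
       show ((![-29/38, -9/19, -7/38, -7/38, 2/19, 2/19, 15/38] : Fin 7 → ℝ) 4) = 2/19 from rfl,
       show ((![-29/38, -9/19, -7/38, -7/38, 2/19, 2/19, 15/38] : Fin 7 → ℝ) 5) = 2/19 from rfl,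
       show ((![-29/38, -9/19, -7/38, -7/38, 2/19, 2/19, 15/38] : Fin 7 → ℝ) 6) = 15/38 from rfl]) <;>
    first
      | ring1
      | linear_combination (-1/361 : ℝ) * h114 + (-1/722 : ℝ) * h57 + (-1/722 : ℝ) * h190 + (-2/361 : ℝ) * h19
      | linear_combination (-1/361 : ℝ) * h114 + (-1/361 : ℝ) * h57
      | linear_combination (1/722 : ℝ) * h114 + (-1/722 : ℝ) * h57 + (-1/722 : ℝ) * h190
      | linear_combination (-1/722 : ℝ) * h114 + (1/722 : ℝ) * h57 + (-2/361 : ℝ) * h19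
      | linear_combination (2/361 : ℝ) * h19
      | linear_combination (-1/722 : ℝ) * h114 + (1/722 : ℝ) * h190
      | linear_combination (1/361 : ℝ) * h114 + (1/722 : ℝ) * h57

lemma hcomb15 : (-(20/19) : ℝ) • (1 : Module.End ℝ V7) + (11/38 : ℝ) • diagL ![1, 2, 3, 3, 4, 4, 5]
    = diagL ![-29/38, -9/19, -7/38, -7/38, 2/19, 2/19, 15/38] := by
  apply LinearMap.ext
  intro x
  funext k
  rw [LinearMap.add_apply, LinearMap.smul_apply, LinearMap.smul_apply, Module.End.one_apply,
    Pi.add_apply, Pi.smul_apply, Pi.smul_apply, diagL_apply, diagL_apply, smul_eq_mul, smul_eq_mul]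
  fin_cases k <;> norm_num <;> ring


end Aux

/-- The bracket satisfies the Jacobi identity (and is skew-symmetric),
`D` is a derivation of it, and the unnormalized moment map `m(μ̃)` — i.e. the endomorphism
`m` of `ℝ⁷` determined by
`⟨m x, y⟩ = -2 ∑ᵢⱼ ⟨μ̃(x,eᵢ),eⱼ⟩⟨μ̃(y,eᵢ),eⱼ⟩ + ∑ᵢⱼ ⟨μ̃(eᵢ,eⱼ),x⟩⟨μ̃(eᵢ,eⱼ),y⟩` —
equals `-(20/19) • Id + 11/38 • D`, which is the indicated diagonal map. -/


theorem stmt :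
    Skew c15 ∧ Jacobi c15 ∧
    diagL ![1, 2, 3, 3, 4, 4, 5] ∈ derivations c15 ∧
    ∀ m : Module.End ℝ V7,
      (∀ x y : V7, dot (m x) y =
          -2 * ∑ i, ∑ j, dot (br c15 x (e i)) (e j) * dot (br c15 y (e i)) (e j)
          + ∑ i, ∑ j, dot (br c15 (e i) (e j)) x * dot (br c15 (e i) (e j)) y) →
      m = (-(20/19) : ℝ) • (1 : Module.End ℝ V7) + (11/38 : ℝ) • diagL ![1, 2, 3, 3, 4, 4, 5]
      ∧ m = diagL ![-29/38, -9/19, -7/38, -7/38, 2/19, 2/19, 15/38] := by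
  exact ⟨skew15, jacobi15, deriv15,
    fun m h => ⟨(moment15 m h).trans hcomb15.symm, moment15 m h⟩⟩
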